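/- Let A, θ ∈ ℝ and let U ⊆ ℝ² be an open set on which u(x,y) := cos θ·x + sin θ·y > 0. Define λ(x,y) = (1/2)·log(u(x,y)) and f(x,y) = A·log(u(x,y)) on U. Then D₁(λ,f) = 0 and D₂(λ,f) = 0 on U. -/

import Mathlib

noncomputable def dx (f : ℝ → ℝ → ℝ) : ℝ → ℝ → ℝ := fun x y => deriv (fun t => f t y) x
noncomputable def dy (f : ℝ → ℝ → ℝ) : ℝ → ℝ → ℝ := fun x y => deriv (fun t => f x t) y

/-- The operator `D₁` from the paper. -/
noncomputable def D1 (l f : ℝ → ℝ → ℝ) : ℝ → ℝ → ℝ := fun x y =>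
  (dx l x y + dx f x y) * (2 * dx l x y * dx f x y + dx (dx f) x y)
  + (dy l x y + dy f x y) * (2 * dy l x y * dx f x y + dy (dx f) x y)
  - (6 * (dx l x y)^2 * dx f x y + 2 * dx (dx l) x y * dx f x y
      + 5 * dx l x y * dx (dx f) x y + dx (dx (dx f)) x y)
  - (6 * (dy l x y)^2 * dx f x y + 2 * dy (dy l) x y * dx f x y
      + 5 * dy l x y * dy (dx f) x y + dy (dy (dx f)) x y)

/-- The operator `D₂` from the paper. -/
noncomputable def D2 (l f : ℝ → ℝ → ℝ) : ℝ → ℝ → ℝ := fun x y =>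
  (dx l x y + dx f x y) * (2 * dx l x y * dy f x y + dx (dy f) x y)
  + (dy l x y + dy f x y) * (2 * dy l x y * dy f x y + dy (dy f) x y)
  - (6 * (dx l x y)^2 * dy f x y + 2 * dx (dx l) x y * dy f x y
      + 5 * dx l x y * dx (dy f) x y + dx (dx (dy f)) x y)
  - (6 * (dy l x y)^2 * dy f x y + 2 * dy (dy l) x y * dy f x y
      + 5 * dy l x y * dy (dy f) x y + dy (dy (dy f)) x y)

open Real Filter

section OneDim
variable (a d c : ℝ)

lemma lin_hasDeriv (x : ℝ) : HasDerivAt (fun t => a*t+d) a x := by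
  simpa using ((hasDerivAt_id x).const_mul a).add_const d

lemma L_log (x : ℝ) (h : a*x+d ≠ 0) :
    deriv (fun t => c * Real.log (a*t+d)) x = c*a/(a*x+d) := by
  have h1 : HasDerivAt (fun t => Real.log (a*t+d)) ((a*x+d)⁻¹ * a) x :=
    by have := (Real.hasDerivAt_log h).comp x (lin_hasDeriv a d x); exact this
  have := (h1.const_mul c).deriv
  rw [this]; field_simp; try ring

lemma L_inv1 (x : ℝ) (h : a*x+d ≠ 0) :
    deriv (fun t => c / (a*t+d)) x = -(c*a)/(a*x+d)^2 := by
  have h1 : HasDerivAt (fun t => (a*t+d)⁻¹) (-a/(a*x+d)^2) x :=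
    (lin_hasDeriv a d x).inv h
  have := (h1.const_mul c).deriv
  simp only [div_eq_mul_inv]
  rw [this]; field_simp; try ring

lemma L_inv2 (x : ℝ) (h : a*x+d ≠ 0) :
    deriv (fun t => c / (a*t+d)^2) x = -(2*c*a)/(a*x+d)^3 := by
  have hp : HasDerivAt (fun t => (a*t+d)^2) (2*(a*x+d)^1*a) x := by
    simpa using (lin_hasDeriv a d x).fun_pow 2
  have h1 : HasDerivAt (fun t => ((a*t+d)^2)⁻¹)
      (-(2*(a*x+d)^1*a) / ((a*x+d)^2)^2) x := hp.inv (pow_ne_zero 2 h)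
  have := (h1.const_mul c).deriv
  simp only [div_eq_mul_inv]
  rw [this]; field_simp; try ring

lemma ev_deriv (g1 g2 : ℝ → ℝ) (x : ℝ) (hx : a*x+d ≠ 0)
    (h : ∀ t, a*t+d ≠ 0 → g1 t = g2 t) : deriv g1 x = deriv g2 x := by
  have hc : ContinuousAt (fun t => a*t+d) x :=
    ((continuous_const.mul continuous_id).add continuous_const).continuousAt
  exact Filter.EventuallyEq.deriv_eq ((hc.eventually_ne hx).mono h)

end OneDim

section TwoDim
variable (a b c : ℝ)

lemma Dx1 (x y : ℝ) (h : a*x+b*y ≠ 0) :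
    dx (fun x y => c * Real.log (a*x+b*y)) x y = c*a/(a*x+b*y) :=
  L_log a (b*y) c x h

lemma Dy1 (x y : ℝ) (h : a*x+b*y ≠ 0) :
    dy (fun x y => c * Real.log (a*x+b*y)) x y = c*b/(a*x+b*y) := by
  show deriv (fun t => c * Real.log (a*x+b*t)) y = _
  have : (fun t => c * Real.log (a*x+b*t)) = fun t => c * Real.log (b*t+a*x) :=
    funext fun t => by rw [add_comm]
  rw [this, L_log b (a*x) c y (by rwa [add_comm]), add_comm (b*y) (a*x)]

lemma Dxx (x y : ℝ) (h : a*x+b*y ≠ 0) :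
    dx (dx (fun x y => c * Real.log (a*x+b*y))) x y = (-(c*a*a))/(a*x+b*y)^2 := by
  show deriv (fun t => dx _ t y) x = _
  rw [ev_deriv a (b*y) _ (fun t => (c*a)/(a*t+b*y)) x h
    (fun t ht => Dx1 a b c t y ht), L_inv1 a (b*y) (c*a) x h]
  try ring_nf

lemma Dyx (x y : ℝ) (h : a*x+b*y ≠ 0) :
    dy (dx (fun x y => c * Real.log (a*x+b*y))) x y = (-(c*a*b))/(a*x+b*y)^2 := by
  show deriv (fun t => dx _ x t) y = _
  rw [ev_deriv b (a*x) _ (fun t => (c*a)/(b*t+a*x)) y (by rwa [add_comm])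
    (fun t ht => by rw [Dx1 a b c x t (by rwa [add_comm]), add_comm (a*x) (b*t)]),
    L_inv1 b (a*x) (c*a) y (by rwa [add_comm]), add_comm (b*y) (a*x)]
  try ring_nf

lemma Dxy (x y : ℝ) (h : a*x+b*y ≠ 0) :
    dx (dy (fun x y => c * Real.log (a*x+b*y))) x y = (-(c*b*a))/(a*x+b*y)^2 := by
  show deriv (fun t => dy _ t y) x = _
  rw [ev_deriv a (b*y) _ (fun t => (c*b)/(a*t+b*y)) x h
    (fun t ht => Dy1 a b c t y ht), L_inv1 a (b*y) (c*b) x h]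
  try ring_nf

lemma Dyy (x y : ℝ) (h : a*x+b*y ≠ 0) :
    dy (dy (fun x y => c * Real.log (a*x+b*y))) x y = (-(c*b*b))/(a*x+b*y)^2 := by
  show deriv (fun t => dy _ x t) y = _
  rw [ev_deriv b (a*x) _ (fun t => (c*b)/(b*t+a*x)) y (by rwa [add_comm])
    (fun t ht => by rw [Dy1 a b c x t (by rwa [add_comm]), add_comm (a*x) (b*t)]),
    L_inv1 b (a*x) (c*b) y (by rwa [add_comm]), add_comm (b*y) (a*x)]
  try ring_nf

lemma Dxxx (x y : ℝ) (h : a*x+b*y ≠ 0) :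
    dx (dx (dx (fun x y => c * Real.log (a*x+b*y)))) x y
      = (2*c*a*a*a)/(a*x+b*y)^3 := by
  show deriv (fun t => dx (dx _) t y) x = _
  rw [ev_deriv a (b*y) _ (fun t => (-(c*a*a))/(a*t+b*y)^2) x h
    (fun t ht => Dxx a b c t y ht), L_inv2 a (b*y) (-(c*a*a)) x h]
  try ring_nf

lemma Dyyx (x y : ℝ) (h : a*x+b*y ≠ 0) :
    dy (dy (dx (fun x y => c * Real.log (a*x+b*y)))) x y
      = (2*c*a*b*b)/(a*x+b*y)^3 := by
  show deriv (fun t => dy (dx _) x t) y = _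
  rw [ev_deriv b (a*x) _ (fun t => (-(c*a*b))/(b*t+a*x)^2) y (by rwa [add_comm])
    (fun t ht => by rw [Dyx a b c x t (by rwa [add_comm]), add_comm (a*x) (b*t)]),
    L_inv2 b (a*x) (-(c*a*b)) y (by rwa [add_comm]), add_comm (b*y) (a*x)]
  try ring_nf

lemma Dxxy (x y : ℝ) (h : a*x+b*y ≠ 0) :
    dx (dx (dy (fun x y => c * Real.log (a*x+b*y)))) x y
      = (2*c*b*a*a)/(a*x+b*y)^3 := by
  show deriv (fun t => dx (dy _) t y) x = _
  rw [ev_deriv a (b*y) _ (fun t => (-(c*b*a))/(a*t+b*y)^2) x h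
    (fun t ht => Dxy a b c t y ht), L_inv2 a (b*y) (-(c*b*a)) x h]
  try ring_nf

lemma Dyyy (x y : ℝ) (h : a*x+b*y ≠ 0) :
    dy (dy (dy (fun x y => c * Real.log (a*x+b*y)))) x y
      = (2*c*b*b*b)/(a*x+b*y)^3 := by
  show deriv (fun t => dy (dy _) x t) y = _
  rw [ev_deriv b (a*x) _ (fun t => (-(c*b*b))/(b*t+a*x)^2) y (by rwa [add_comm])
    (fun t ht => by rw [Dyy a b c x t (by rwa [add_comm]), add_comm (a*x) (b*t)]),
    L_inv2 b (a*x) (-(c*b*b)) y (by rwa [add_comm]), add_comm (b*y) (a*x)]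
  try ring_nf

end TwoDim

set_option maxHeartbeats 1000000 in
theorem stmt10 (A θ : ℝ) (U : Set (ℝ × ℝ)) (hU : IsOpen U)
    (hpos : ∀ p ∈ U, Real.cos θ * p.1 + Real.sin θ * p.2 > 0) :
    ∀ p ∈ U,
      D1 (fun x y => (1/2) * Real.log (Real.cos θ * x + Real.sin θ * y))
         (fun x y => A * Real.log (Real.cos θ * x + Real.sin θ * y)) p.1 p.2 = 0 ∧
      D2 (fun x y => (1/2) * Real.log (Real.cos θ * x + Real.sin θ * y))
         (fun x y => A * Real.log (Real.cos θ * x + Real.sin θ * y)) p.1 p.2 = 0 := by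
  intro p hp
  have h : Real.cos θ * p.1 + Real.sin θ * p.2 ≠ 0 := (hpos p hp).ne'
  obtain ⟨x, y⟩ := p
  simp only at h ⊢
  constructor
  · unfold D1
    rw [Dx1 _ _ (1/2) x y h, Dx1 _ _ A x y h, Dy1 _ _ (1/2) x y h, Dy1 _ _ A x y h,
        Dxx _ _ (1/2) x y h, Dxx _ _ A x y h, Dyx _ _ A x y h,
        Dyy _ _ (1/2) x y h, Dxxx _ _ A x y h, Dyyx _ _ A x y h]
    generalize hr : Real.cos θ * x + Real.sin θ * y = r at h ⊢
    generalize Real.cos θ = a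
    generalize Real.sin θ = b
    clear hp hpos hU hr
    field_simp
    ring
  · unfold D2
    rw [Dx1 _ _ (1/2) x y h, Dx1 _ _ A x y h, Dy1 _ _ (1/2) x y h, Dy1 _ _ A x y h,
        Dxx _ _ (1/2) x y h, Dxy _ _ A x y h,
        Dyy _ _ (1/2) x y h, Dyy _ _ A x y h, Dxxy _ _ A x y h, Dyyy _ _ A x y h]
    generalize hr : Real.cos θ * x + Real.sin θ * y = r at h ⊢
    generalize Real.cos θ = a
    generalize Real.sin θ = b
    clear hp hpos hU hr
    field_simp
    ring
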